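/- arXiv:2409.16939 — 3 statements merged into one kernel-verified Lean document; each statement's English description precedes it below -/
import Mathlib

section
/- (Super Frobenius Reciprocity) Let H be a subgroup of a finite group G with compatible supercharacter theories C_H and C_G. For every superclass function Φ on H and every superclass function θ on G, ⟨Sind_H^G Φ, θ⟩_G = ⟨Φ, θ|_H⟩_H, where ⟨·,·⟩ denotes the usual inner product of class functions, (⟨f,g⟩_G = (1/|G|) Σ_{x∈G} f(x) conj(g(x))). -/
open scoped BigOperators Classical

noncomputable section

/-- `χ : G → ℂ` is an irreducible character of `G`. -/
def IsIrrChar (G : Type) [Group G] (χ : G → ℂ) : Prop :=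
  ∃ V : FDRep ℂ G, CategoryTheory.Simple V ∧ χ = V.character

/-- The set of irreducible characters of `G`. -/
def Irr (G : Type) [Group G] : Set (G → ℂ) := {χ | IsIrrChar G χ}

/-- The trivial character. -/
def triv (G : Type) [Group G] : G → ℂ := fun _ => 1

/-- `σ_A = ∑_{χ ∈ A} χ(1)·χ`. -/
def sigma {G : Type} [Group G] (A : Set (G → ℂ)) : G → ℂ :=
  fun g => ∑ᶠ χ ∈ A, χ 1 * χ g

/-- The regular character `Reg(G) = ∑_{χ ∈ Irr G} χ(1)·χ`. -/
def Reg (G : Type) [Group G] : G → ℂ := fun g => ∑ᶠ χ ∈ Irr G, χ 1 * χ g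

/-- `P` is a partition of the set `S`. -/
def IsPartitionOn {α : Type} (S : Set α) (P : Set (Set α)) : Prop :=
  (∀ A ∈ P, A.Nonempty) ∧ (∀ A ∈ P, A ⊆ S) ∧ ∀ s ∈ S, ∃! A, A ∈ P ∧ s ∈ A

/-- A supercharacter theory of a finite group `G`. -/
structure SCTheory (G : Type) [Group G] [Finite G] where
  X : Set (Set (G → ℂ))
  K : Set (Set G)
  partX : IsPartitionOn (Irr G) X
  partK : IsPartitionOn Set.univ K
  one_mem : ({1} : Set G) ∈ K
  card_eq : X.ncard = K.ncard
  const : ∀ A ∈ X, ∀ B ∈ K, ∀ x ∈ B, ∀ y ∈ B, sigma A x = sigma A y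

/-- The superclass of `g`. -/
def SCl {G : Type} [Group G] [Finite G] (C : SCTheory G) (g : G) : Set G :=
  ⋃₀ {B | B ∈ C.K ∧ g ∈ B}

/-- A superclass function: a function constant on each superclass. -/
def IsSCF {G : Type} [Group G] [Finite G] (C : SCTheory G) (f : G → ℂ) : Prop :=
  ∀ B ∈ C.K, ∀ x ∈ B, ∀ y ∈ B, f x = f y

/-- A supercharacter of the theory `C`. -/
def IsSC {G : Type} [Group G] [Finite G] (C : SCTheory G) (σ : G → ℂ) : Prop :=
  ∃ A ∈ C.X, σ = sigma A

/-- Compatibility of a theory on a subgroup with a theory on the whole group. -/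
def Compat {G : Type} [Group G] [Finite G] (H : Subgroup G) (CH : SCTheory H)
    (CG : SCTheory G) : Prop :=
  ∀ h : H, (Subtype.val '' SCl CH h : Set G) ⊆ SCl CG (h : G)

/-- Compatibility of theories on nested subgroups. -/
def CompatLE {G : Type} [Group G] [Finite G] {H₁ H₂ : Subgroup G} (hle : H₁ ≤ H₂)
    (C₁ : SCTheory H₁) (C₂ : SCTheory H₂) : Prop :=
  ∀ x : H₁, (Subtype.val '' SCl C₁ x : Set G) ⊆
    Subtype.val '' SCl C₂ ⟨(x : G), hle x.2⟩

/-- Extension by zero of a function on a subgroup. -/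
def ext0 {G : Type} [Group G] (H : Subgroup G) (Φ : H → ℂ) : G → ℂ :=
  fun g => if hg : g ∈ H then Φ ⟨g, hg⟩ else 0

/-- Superinduction from `H` to `G`. -/
def Sind {G : Type} [Group G] [Finite G] (H : Subgroup G) (CG : SCTheory G)
    (Φ : H → ℂ) : G → ℂ :=
  fun g => ((Nat.card G : ℂ) / ((Nat.card H : ℂ) * ((SCl CG g).ncard : ℂ))) *
    ∑ᶠ x ∈ SCl CG g, ext0 H Φ x

/-- The standard inner product of functions on a finite type. -/
def iprod (α : Type) [Finite α] (f g : α → ℂ) : ℂ :=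
  (Nat.card α : ℂ)⁻¹ * ∑ᶠ x : α, f x * (starRingEnd ℂ) (g x)

/-- `f` is a linear (degree-one) character. -/
def IsLin {K : Type} [Group K] (f : K → ℂ) : Prop :=
  ∃ φ : K →* ℂˣ, f = fun k => (φ k : ℂ)

/-- `f` is a sum of linear characters. -/
def IsSumLin {K : Type} [Group K] (f : K → ℂ) : Prop :=
  f ∈ AddSubmonoid.closure {g | IsLin g}

end
/-- Super Frobenius Reciprocity. -/
theorem stmt4 {G : Type} [Group G] [Finite G] (H : Subgroup G)
    (CH : SCTheory H) (CG : SCTheory G) (hc : Compat H CH CG)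
    (Φ : H → ℂ) (hΦ : IsSCF CH Φ) (θ : G → ℂ) (hθ : IsSCF CG θ) :
    iprod G (Sind H CG Φ) θ = iprod H Φ (fun h => θ (h : G)) := by
  classical
  haveI : Fintype G := Fintype.ofFinite G
  haveI : Fintype H := Fintype.ofFinite ↥H
  -- basic facts about superclasses
  have hsclK : ∀ g : G, SCl CG g ∈ CG.K ∧ g ∈ SCl CG g := by
    intro g
    obtain ⟨A, ⟨hA, hgA⟩, huniq⟩ := CG.partK.2.2 g (Set.mem_univ g)
    have hset : {B | B ∈ CG.K ∧ g ∈ B} = {A} := by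
      ext B
      constructor
      · intro hB; exact huniq B hB
      · rintro rfl; exact ⟨hA, hgA⟩
    rw [SCl, hset, Set.sUnion_singleton]
    exact ⟨hA, hgA⟩
  have hscl_eq : ∀ {x g : G}, x ∈ SCl CG g → SCl CG x = SCl CG g := by
    intro x g hx
    obtain ⟨A, -, huniq⟩ := CG.partK.2.2 x (Set.mem_univ x)
    rw [huniq _ ⟨(hsclK x).1, (hsclK x).2⟩, huniq _ ⟨(hsclK g).1, hx⟩]
  have hθc : ∀ {x g : G}, x ∈ SCl CG g → θ x = θ g := by
    intro x g hx
    exact hθ _ (hsclK g).1 _ hx _ (hsclK g).2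
  set n : ℂ := (Nat.card G : ℂ) with hn_def
  set m : ℂ := (Nat.card H : ℂ) with hm_def
  have hn : n ≠ 0 := Nat.cast_ne_zero.mpr Nat.card_pos.ne'
  have hm : m ≠ 0 := Nat.cast_ne_zero.mpr Nat.card_pos.ne'
  set T : G → Finset G := fun g => (SCl CG g).toFinset with hT_def
  have hTmem : ∀ x g : G, x ∈ T g ↔ x ∈ SCl CG g := by
    intro x g; simp [hT_def]
  have hTsym : ∀ x g : G, x ∈ T g ↔ g ∈ T x := by
    intro x g
    rw [hTmem, hTmem]
    constructor
    · intro hx; rw [hscl_eq hx]; exact (hsclK g).2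
    · intro hg; rw [hscl_eq hg]; exact (hsclK x).2
  have hTeq : ∀ {x g : G}, g ∈ T x → T g = T x := by
    intro x g hg
    simp only [hT_def]
    rw [hscl_eq ((hTmem g x).mp hg)]
  have hTcard : ∀ x : G, ((T x).card : ℂ) ≠ 0 := by
    intro x
    have : x ∈ T x := (hTmem x x).mpr (hsclK x).2
    exact_mod_cast (Finset.card_pos.mpr ⟨x, this⟩).ne'
  set F : G → ℂ := fun x => ext0 H Φ x * (starRingEnd ℂ) (θ x) with hF_def
  set c : G → ℂ := fun g => n / (m * ((T g).card : ℂ)) with hc_def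
  have hSind : ∀ g : G, Sind H CG Φ g = c g * ∑ x ∈ T g, ext0 H Φ x := by
    intro g
    rw [Sind, finsum_mem_eq_toFinset_sum, Set.ncard_eq_toFinset_card']
  have step1 : ∑ g : G, Sind H CG Φ g * (starRingEnd ℂ) (θ g)
      = ∑ g : G, ∑ x ∈ T g, c g * F x := by
    refine Finset.sum_congr rfl fun g _ => ?_
    rw [hSind g, mul_assoc, Finset.sum_mul, Finset.mul_sum]
    refine Finset.sum_congr rfl fun x hx => ?_
    have : θ x = θ g := hθc ((hTmem x g).mp hx)
    simp only [hF_def, this]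
  have step2 : ∑ g : G, ∑ x ∈ T g, c g * F x = ∑ x : G, ∑ g ∈ T x, c g * F x := by
    refine Finset.sum_comm' ?_
    intro g x
    simp [hTsym g x]
  have step3 : ∀ x : G, ∑ g ∈ T x, c g * F x = (n / m) * F x := by
    intro x
    have : ∑ g ∈ T x, c g * F x = ∑ g ∈ T x, c x * F x := by
      refine Finset.sum_congr rfl fun g hg => ?_
      simp only [hc_def, hTeq hg]
    rw [this, Finset.sum_const, nsmul_eq_mul]
    simp only [hc_def]
    field_simp [hTcard x, hm]
  have step4 : ∑ x : G, F x = ∑ h : H, Φ h * (starRingEnd ℂ) (θ (h : G)) := by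
    have e2 : ∑ x ∈ Set.toFinset (H : Set G), F x = ∑ h : ↥H, F ↑h :=
      Finset.sum_subtype (p := fun x => x ∈ H) _ (by intro x; simp) F
    have e1 : ∑ x : G, F x = ∑ x ∈ Set.toFinset (H : Set G), F x := by
      refine (Finset.sum_subset (Finset.subset_univ _) ?_).symm
      intro x _ hx
      have hxH : x ∉ H := by simpa using hx
      simp [hF_def, ext0, hxH]
    rw [e1, e2]
    refine Finset.sum_congr rfl fun h _ => ?_
    have hxH : (h : G) ∈ H := h.2
    simp [hF_def, ext0, hxH]
  rw [iprod, iprod, finsum_eq_sum_of_fintype, finsum_eq_sum_of_fintype,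
    step1, step2]
  have : ∑ x : G, ∑ g ∈ T x, c g * F x = (n / m) * ∑ x : G, F x := by
    rw [Finset.mul_sum]
    exact Finset.sum_congr rfl fun x _ => step3 x
  rw [this, step4]
  set S : ℂ := ∑ h : ↥H, Φ h * (starRingEnd ℂ) (θ (h : G))
  calc n⁻¹ * (n / m * S) = (n⁻¹ * n) * (m⁻¹ * S) := by ring
    _ = m⁻¹ * S := by rw [inv_mul_cancel₀ hn, one_mul]
end

section
/- (Uchida–van der Waall Theorem for arithmetic Heilbronn supercharacters) Let G be a finite group with a compatible family of supercharacter theories on its subgroups and integers {n(H,σ)} satisfying ACH1–ACH3. Suppose H is a subgroup of G such that Sind_H^G 1_H = 1_G + Σ_{i∈I} Sind_{H_i}^G σ_i, where I is a finite index set, each H_i is a subgroup of G, and each σ_i is a supercharacter of H_i that is a sum of linear characters of H_i. Then n(H, 1_H) ≥ n(G, 1_G). -/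
open scoped BigOperators Classical

namespace UvdW
open CategoryTheory

noncomputable section

variable {K : Type} [Group K] [Fintype K]

def trivRep (K : Type) [Group K] : FDRep ℂ K :=
  FDRep.of (Representation.trivial ℂ (G := K) (V := ℂ))

lemma mono_inj {Y : FDRep ℂ K} (f : Y ⟶ trivRep K) [Mono f] : Function.Injective f.hom := by
  let F := Action.forget (FGModuleCat ℂ) (MonCat.of K) ⋙ forget₂ (FGModuleCat ℂ) (ModuleCat ℂ)
  have h1 : Mono (F.map f) := Functor.map_mono F f
  rw [ModuleCat.mono_iff_injective] at h1
  exact h1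

instance trivRep_simple : Simple (trivRep K) := by
  constructor
  intro Y f hm
  constructor
  · intro hiso h0
    rw [h0] at hiso
    have h1 : (𝟙 (trivRep K)) = inv (0 : Y ⟶ trivRep K) ≫ 0 := (IsIso.inv_hom_id _).symm
    rw [Limits.comp_zero] at h1
    let o : (trivRep K).V := show ℂ from 1
    have h2 := congrArg (fun (g : trivRep K ⟶ trivRep K) => ((g.hom.hom.hom : (trivRep K).V →ₗ[ℂ] ℂ)) o) h1
    simp only [Action.zero_hom] at h2
    have h3 : (1 : ℂ) = 0 := h2
    exact one_ne_zero h3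
  · intro hne
    have hinj0 : Function.Injective f.hom := mono_inj f
    let fl : Y.V →ₗ[ℂ] ℂ := f.hom.hom.hom
    have hinj : Function.Injective fl := hinj0
    have hhom_ne : fl ≠ 0 := by
      intro h; apply hne; ext1; ext1
      show fl = (0 : Y.V →ₗ[ℂ] ℂ)
      exact h
    have hsurj : Function.Surjective fl := by
      obtain ⟨v, hv⟩ : ∃ v, fl v ≠ 0 := by
        by_contra hc
        push_neg at hc
        exact hhom_ne (by ext w; simpa using hc w)
      intro a
      refine ⟨((a / fl v) : ℂ) • v, ?_⟩
      rw [map_smul]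
      show (a / fl v) * fl v = a
      exact div_mul_cancel₀ _ hv
    let e : Y.V ≃ₗ[ℂ] ℂ := LinearEquiv.ofBijective fl ⟨hinj, hsurj⟩
    have hfix : ∀ g : K, ∀ y : Y.V, fl ((Y.ρ g) y) = fl y := by
      intro g y
      have hc := f.comm g
      have := congrArg (fun (φ : Y.V ⟶ (trivRep K).V) => ((φ.hom.hom : Y.V →ₗ[ℂ] ℂ)) y) hc
      exact this
    have hcomm : ∀ g : K, ∀ x : ℂ, (Y.ρ g) (e.symm x) = e.symm x := by
      intro g x
      apply hinj
      show fl _ = fl _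
      rw [hfix]
    let ginv : trivRep K ⟶ Y :=
      { hom := FGModuleCat.ofHom (e.symm.toLinearMap : (trivRep K).V →ₗ[ℂ] Y.V)
        comm := by
          intro g
          refine FGModuleCat.hom_ext (LinearMap.ext fun (x : ℂ) => ?_)
          show e.symm ((Representation.trivial ℂ (G := K) (V := ℂ)) g x) = (Y.ρ g) (e.symm x)
          rw [hcomm]
          rfl }
    refine ⟨⟨ginv, ?_, ?_⟩⟩
    · ext y
      show e.symm (fl y) = y
      exact e.symm_apply_apply y
    · apply Action.hom_ext
      refine FGModuleCat.hom_ext (LinearMap.ext fun (x : ℂ) => ?_)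
      show fl (e.symm x) = x
      exact e.apply_symm_apply x

lemma trivRep_char (g : K) : (trivRep K).character g = 1 := by
  show LinearMap.trace ℂ ℂ ((Representation.trivial ℂ (G := K) (V := ℂ)) g) = 1
  simp [Representation.trivial]

lemma triv_mem_Irr : (fun _ : K => (1:ℂ)) ∈ Irr K :=
  ⟨trivRep K, trivRep_simple, funext fun g => (trivRep_char g).symm⟩

lemma card_ne : (Fintype.card K : ℂ) ≠ 0 := by
  exact_mod_cast Fintype.card_ne_zero

lemma orth {χ ψ : K → ℂ} (hχ : χ ∈ Irr K) (hψ : ψ ∈ Irr K) :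
    ∑ g : K, χ g * ψ g⁻¹ = if χ = ψ then (Fintype.card K : ℂ) else 0 := by
  obtain ⟨V, hV, rfl⟩ := hχ
  obtain ⟨W, hW, rfl⟩ := hψ
  haveI inv1 : Invertible ((Fintype.card K : ℂ)) := invertibleOfNonzero card_ne
  have key : (⅟(Fintype.card K : ℂ)) • ∑ g : K, V.character g * W.character g⁻¹
      = (if Nonempty (V ≅ W) then (1:ℂ) else 0) := by
      haveI := hV; haveI := hW
      haveI : Invertible (Nat.card K : ℂ) := by rw [Nat.card_eq_fintype_card]; exact inv1
      have h := FDRep.char_orthonormal V W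
      rw [Nat.card_eq_fintype_card] at h
      rw [invOf_eq_inv, smul_eq_mul]; simpa using h
  by_cases hiso : Nonempty (V ≅ W)
  · rw [if_pos hiso] at key
    rw [if_pos (FDRep.char_iso hiso.some)]
    calc ∑ g : K, V.character g * W.character g⁻¹
        = (Fintype.card K : ℂ) *
          ((⅟(Fintype.card K : ℂ)) • ∑ g : K, V.character g * W.character g⁻¹) := by
          rw [smul_eq_mul, ← mul_assoc, mul_invOf_self, one_mul]
      _ = (Fintype.card K : ℂ) := by rw [key]; simp
  · rw [if_neg hiso] at key
    have hne : V.character ≠ W.character := by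
      intro h
      have keyVV : (⅟(Fintype.card K : ℂ)) • ∑ g : K, V.character g * V.character g⁻¹
          = (if Nonempty (V ≅ V) then (1:ℂ) else 0) := by
          haveI := hV
          haveI : Invertible (Nat.card K : ℂ) := by rw [Nat.card_eq_fintype_card]; exact inv1
          have h := FDRep.char_orthonormal V V
          rw [Nat.card_eq_fintype_card] at h
          rw [invOf_eq_inv, smul_eq_mul]; simpa using h
      rw [if_pos ⟨Iso.refl V⟩] at keyVV
      rw [← h] at key
      rw [key] at keyVV
      exact one_ne_zero keyVV.symm
    rw [if_neg hne]
    have h2 : (Fintype.card K : ℂ) *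
        ((⅟(Fintype.card K : ℂ)) • ∑ g : K, V.character g * W.character g⁻¹) = 0 := by
      rw [key]; simp
    rwa [smul_eq_mul, ← mul_assoc, mul_invOf_self, one_mul] at h2

lemma chi_one_ne {χ : K → ℂ} (hχ : χ ∈ Irr K) : χ 1 ≠ 0 := by
  intro h0
  have horth := orth hχ hχ
  rw [if_pos rfl] at horth
  obtain ⟨V, hV, rfl⟩ := hχ
  have hr : Module.finrank ℂ V = 0 := by
    have h1 := FDRep.char_one V
    rw [h0] at h1
    exact_mod_cast h1.symm
  haveI : Subsingleton V := Module.finrank_zero_iff.mp hr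
  have hz : ∀ g : K, V.character g = 0 := by
    intro g
    show LinearMap.trace ℂ V (V.ρ g) = 0
    have h2 : V.ρ g = 0 := Subsingleton.elim _ _
    rw [h2, map_zero]
  rw [Finset.sum_congr rfl (fun g _ => by rw [hz g, zero_mul])] at horth
  simp at horth
  exact card_ne horth.symm

/-- The pairing linear functional. -/
def Lmap (χ : K → ℂ) : (K → ℂ) →ₗ[ℂ] ℂ where
  toFun f := ∑ g : K, f g * χ g⁻¹
  map_add' f h := by simp [add_mul, Finset.sum_add_distrib]
  map_smul' c f := by simp [Finset.mul_sum, smul_eq_mul, mul_assoc]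

lemma Lmap_irr {χ ψ : K → ℂ} (hψ : ψ ∈ Irr K) (hχ : χ ∈ Irr K) :
    Lmap χ ψ = if ψ = χ then (Fintype.card K : ℂ) else 0 := orth hψ hχ

lemma Irr_li : LinearIndependent ℂ (fun χ : ↥(Irr K) => (χ : K → ℂ)) := by
  rw [linearIndependent_iff']
  intro s c hsum ψ hψs
  have h1 := congrArg (Lmap (ψ : K → ℂ)) hsum
  rw [map_sum, map_zero] at h1
  have h2 : ∀ χ ∈ s, Lmap (ψ : K → ℂ) (c χ • (χ : K → ℂ))
      = (if χ = ψ then c χ * (Fintype.card K : ℂ) else 0) := by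
    intro χ _
    rw [map_smul, Lmap_irr χ.2 ψ.2, smul_eq_mul]
    by_cases h : χ = ψ
    · rw [if_pos h, if_pos (by rw [h])]
    · rw [if_neg h, if_neg (fun hh => h (Subtype.ext hh)), mul_zero]
  rw [Finset.sum_congr rfl h2, Finset.sum_ite_eq' s ψ (fun χ => c χ * _), if_pos hψs] at h1
  exact (mul_eq_zero.mp h1).resolve_right card_ne

lemma Irr_finite : (Irr K).Finite := Irr_li.setFinite

end
end UvdW
namespace UvdW
open CategoryTheory
noncomputable section

set_option linter.unusedSectionVars false

variable {K : Type} [Group K] [Fintype K]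

/-- Submodule of superclass functions. -/
def SCFsub (C : SCTheory K) : Submodule ℂ (K → ℂ) where
  carrier := {f | ∀ B ∈ C.K, ∀ x ∈ B, ∀ y ∈ B, f x = f y}
  add_mem' := by
    intro f g hf hg B hB x hx y hy
    show f x + g x = f y + g y
    rw [hf B hB x hx y hy, hg B hB x hx y hy]
  zero_mem' := by intro B hB x hx y hy; rfl
  smul_mem' := by
    intro c f hf B hB x hx y hy
    show c * f x = c * f y
    rw [hf B hB x hx y hy]

lemma K_finite (C : SCTheory K) : (C.K).Finite := Set.toFinite _

lemma X_finite (C : SCTheory K) : (C.X).Finite := by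
  apply Set.Finite.subset (Irr_finite (K := K)).finite_subsets
  intro A hA
  exact C.partX.2.1 A hA

lemma finrank_SCF_le (C : SCTheory K) :
    Module.finrank ℂ (SCFsub C) ≤ (C.K).ncard := by
  haveI : Fintype ↥(C.K) := (K_finite C).fintype
  let Φ : SCFsub C →ₗ[ℂ] (↥(C.K) → ℂ) :=
    { toFun := fun f B => (f : K → ℂ) (C.partK.1 B.1 B.2).some
      map_add' := fun f g => rfl
      map_smul' := fun c f => rfl }
  have hinj : Function.Injective Φ := by
    intro f g hfg
    ext x
    obtain ⟨B, ⟨hBK, hxB⟩, -⟩ := C.partK.2.2 x (Set.mem_univ x)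
    have hf := f.2 B hBK x hxB (C.partK.1 B hBK).some (C.partK.1 B hBK).some_mem
    have hg := g.2 B hBK x hxB (C.partK.1 B hBK).some (C.partK.1 B hBK).some_mem
    have := congrArg (fun u => u (⟨B, hBK⟩ : ↥(C.K))) hfg
    show (f : K → ℂ) x = (g : K → ℂ) x
    rw [hf, hg]
    exact this
  calc Module.finrank ℂ (SCFsub C) ≤ Module.finrank ℂ (↥(C.K) → ℂ) :=
        LinearMap.finrank_le_finrank_of_injective hinj
    _ = Fintype.card ↥(C.K) := Module.finrank_pi ℂ
    _ = (C.K).ncard := by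
        rw [Set.ncard_eq_toFinset_card', Set.toFinset_card]

lemma sigma_eq_sum (A : Set (K → ℂ)) (hA : A.Finite) :
    sigma A = ∑ χ ∈ hA.toFinset, χ 1 • χ := by
  funext g
  show ∑ᶠ χ ∈ A, χ 1 * χ g = _
  rw [finsum_mem_eq_finite_toFinset_sum _ hA, Finset.sum_apply]
  rfl

lemma Lmap_sigma {A : Set (K → ℂ)} (hA : A ⊆ Irr K) {χ : K → ℂ} (hχ : χ ∈ Irr K) :
    Lmap χ (sigma A) = if χ ∈ A then χ 1 * (Fintype.card K : ℂ) else 0 := by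
  have hAf : A.Finite := Irr_finite.subset hA
  rw [sigma_eq_sum A hAf, map_sum]
  have h2 : ∀ ψ ∈ hAf.toFinset, Lmap χ (ψ 1 • ψ)
      = (if ψ = χ then ψ 1 * (Fintype.card K : ℂ) else 0) := by
    intro ψ hψ
    rw [map_smul, Lmap_irr (hA (hAf.mem_toFinset.mp hψ)) hχ, smul_eq_mul]
    by_cases h : ψ = χ
    · rw [if_pos h, if_pos h]
    · rw [if_neg h, if_neg h, mul_zero]
  rw [Finset.sum_congr rfl h2, Finset.sum_ite_eq' hAf.toFinset χ (fun ψ => ψ 1 * _)]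
  by_cases h : χ ∈ A
  · rw [if_pos (hAf.mem_toFinset.mpr h), if_pos h]
  · rw [if_neg (fun hh => h (hAf.mem_toFinset.mp hh)), if_neg h]

lemma sigma_mem_SCF (C : SCTheory K) {A : Set (K → ℂ)} (hA : A ∈ C.X) :
    sigma A ∈ SCFsub C := fun B hB x hx y hy => C.const A hA B hB x hx y hy

lemma one_mem_SCF (C : SCTheory K) : (fun _ : K => (1:ℂ)) ∈ SCFsub C :=
  fun _ _ _ _ _ _ => rfl

theorem triv_isSC' (C : SCTheory K) : IsSC C (fun _ => 1) := by
  classical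
  haveI hXfin : Fintype ↥(C.X) := (X_finite C).fintype
  -- the part containing the trivial character
  obtain ⟨A₀, ⟨hA₀X, htrivA₀⟩, -⟩ := C.partX.2.2 _ (triv_mem_Irr (K := K))
  haveI : Nonempty ↥(C.X) := ⟨⟨A₀, hA₀X⟩⟩
  refine ⟨A₀, hA₀X, ?_⟩
  suffices hA : A₀ = {fun _ : K => (1:ℂ)} by
    rw [hA]
    funext g
    show _ = ∑ᶠ χ ∈ ({fun _ : K => (1:ℂ)} : Set (K → ℂ)), χ 1 * χ g
    rw [finsum_mem_singleton]
    simp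
  -- the linearly independent family of supercharacters
  let v : ↥(C.X) → SCFsub C := fun A => ⟨sigma A.1, sigma_mem_SCF C A.2⟩
  -- uniqueness of the part containing an irreducible character
  have huniq : ∀ (χ : K → ℂ), χ ∈ Irr K → ∀ A : ↥(C.X), χ ∈ A.1 →
      ∀ A' : ↥(C.X), χ ∈ A'.1 → A = A' := by
    intro χ hχ A hA A' hA'
    obtain ⟨B, -, hB⟩ := C.partX.2.2 χ hχ
    have h1 := hB A.1 ⟨A.2, hA⟩
    have h2 := hB A'.1 ⟨A'.2, hA'⟩
    exact Subtype.ext (h1.trans h2.symm)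
  have hli : LinearIndependent ℂ v := by
    rw [linearIndependent_iff']
    intro s c hsum A₁ hA₁s
    obtain ⟨χ, hχA₁⟩ := C.partX.1 A₁.1 A₁.2
    have hχIrr : χ ∈ Irr K := C.partX.2.1 A₁.1 A₁.2 hχA₁
    have h1 := congrArg (fun (w : SCFsub C) => Lmap χ (w : K → ℂ)) hsum
    simp only [Submodule.coe_sum, Submodule.coe_smul] at h1
    have h1' : ∑ A ∈ s, Lmap χ (c A • sigma A.1) = 0 := by
      simpa using h1
    have h2 : ∀ A ∈ s, Lmap χ (c A • sigma A.1)
        = (if A = A₁ then c A * (χ 1 * (Fintype.card K : ℂ)) else 0) := by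
      intro A _
      rw [map_smul, Lmap_sigma (C.partX.2.1 A.1 A.2) hχIrr, smul_eq_mul]
      by_cases h : A = A₁
      · rw [if_pos h, if_pos (h ▸ hχA₁)]
      · rw [if_neg h, if_neg (fun hh => h (huniq χ hχIrr A hh A₁ hχA₁)), mul_zero]
    rw [Finset.sum_congr rfl h2, Finset.sum_ite_eq' s A₁ (fun A => c A * _), if_pos hA₁s] at h1'
    rcases mul_eq_zero.mp h1' with h | h
    · exact h
    · exact absurd h (mul_ne_zero (chi_one_ne hχIrr) card_ne)
  -- the basis
  have hcard : Fintype.card ↥(C.X) = Module.finrank ℂ (SCFsub C) := by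
    have hle1 : Fintype.card ↥(C.X) ≤ Module.finrank ℂ (SCFsub C) :=
      hli.fintype_card_le_finrank
    have hX : Fintype.card ↥(C.X) = (C.X).ncard := by
      rw [Set.ncard_eq_toFinset_card', Set.toFinset_card]
    have hle2 : Module.finrank ℂ (SCFsub C) ≤ Fintype.card ↥(C.X) := by
      rw [hX, C.card_eq]; exact finrank_SCF_le C
    omega
  let b := basisOfLinearIndependentOfCardEqFinrank hli hcard
  have hb : ∀ A, b A = v A := fun A =>
    congrFun (coe_basisOfLinearIndependentOfCardEqFinrank hli hcard) A
  let w : SCFsub C := ⟨fun _ => 1, one_mem_SCF C⟩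
  let c : ↥(C.X) → ℂ := fun A => b.repr w A
  have hrepr := b.sum_repr w
  have hfun : (fun _ : K => (1:ℂ)) = ∑ A : ↥(C.X), c A • sigma A.1 := by
    calc (fun _ : K => (1:ℂ)) = ((w : SCFsub C) : K → ℂ) := rfl
      _ = ((∑ A : ↥(C.X), b.repr w A • b A : SCFsub C) : K → ℂ) := by rw [hrepr]
      _ = ∑ A : ↥(C.X), c A • sigma A.1 := by
          rw [Submodule.coe_sum]
          apply Finset.sum_congr rfl
          intro A _
          rw [hb A]
          rfl
  have heval : ∀ χ : K → ℂ, χ ∈ Irr K →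
      (if (fun _ : K => (1:ℂ)) = χ then (Fintype.card K : ℂ) else 0)
      = ∑ A : ↥(C.X), c A * (if χ ∈ A.1 then χ 1 * (Fintype.card K : ℂ) else 0) := by
    intro χ hχ
    have h1 := congrArg (Lmap χ) hfun
    rw [map_sum] at h1
    have h2 : Lmap χ (fun _ : K => (1:ℂ))
        = if (fun _ : K => (1:ℂ)) = χ then (Fintype.card K : ℂ) else 0 :=
      orth triv_mem_Irr hχ
    rw [h2] at h1
    rw [h1]
    apply Finset.sum_congr rfl
    intro A _
    rw [map_smul, Lmap_sigma (C.partX.2.1 A.1 A.2) hχ, smul_eq_mul]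
  have hcollapse : ∀ (χ : K → ℂ), χ ∈ Irr K → ∀ A₁ : ↥(C.X), χ ∈ A₁.1 →
      ∑ A : ↥(C.X), c A * (if χ ∈ A.1 then χ 1 * (Fintype.card K : ℂ) else 0)
      = c A₁ * (χ 1 * (Fintype.card K : ℂ)) := by
    intro χ hχ A₁ hχA₁
    rw [Finset.sum_eq_single A₁]
    · rw [if_pos hχA₁]
    · intro A _ hne
      rw [if_neg (fun hh => hne (huniq χ hχ A hh A₁ hχA₁)), mul_zero]
    · intro h
      exact absurd (Finset.mem_univ A₁) h
  have hc1 : c ⟨A₀, hA₀X⟩ = 1 := by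
    have h := (heval _ (triv_mem_Irr (K := K))).trans
      (hcollapse _ (triv_mem_Irr (K := K)) ⟨A₀, hA₀X⟩ htrivA₀)
    rw [if_pos rfl] at h
    rw [one_mul] at h
    have h2 : c ⟨A₀, hA₀X⟩ * (Fintype.card K : ℂ) = 1 * (Fintype.card K : ℂ) := by
      rw [one_mul, ← h]
    exact mul_right_cancel₀ card_ne h2
  have hsub : A₀ ⊆ {fun _ : K => (1:ℂ)} := by
    intro χ hχA₀
    have hχIrr : χ ∈ Irr K := C.partX.2.1 A₀ hA₀X hχA₀
    by_contra hne
    have h := (heval χ hχIrr).trans (hcollapse χ hχIrr ⟨A₀, hA₀X⟩ hχA₀)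
    rw [if_neg (fun hh => hne (Set.mem_singleton_iff.mpr hh.symm))] at h
    rw [hc1, one_mul] at h
    exact (mul_ne_zero (chi_one_ne hχIrr) card_ne) h.symm
  exact Set.Subset.antisymm hsub (by
    intro x hx
    rw [Set.mem_singleton_iff] at hx
    rw [hx]
    exact htrivA₀)

theorem triv_isSC (K : Type) [Group K] [Finite K] (C : SCTheory K) :
    IsSC C (fun _ => 1) := by
  letI := Fintype.ofFinite K
  exact triv_isSC' C

end
end UvdW
/-- Uchida–van der Waall Theorem for arithmetic Heilbronn supercharacters. -/
theorem stmt10 {G : Type} [Group G] [Finite G]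
    (𝒞 : ∀ H : Subgroup G, SCTheory H) (CG : SCTheory G)
    (hfam : ∀ (H₁ H₂ : Subgroup G) (hle : H₁ ≤ H₂), CompatLE hle (𝒞 H₁) (𝒞 H₂))
    (hfamG : ∀ H : Subgroup G, Compat H (𝒞 H) CG)
    (n : ∀ H : Subgroup G, (H → ℂ) → ℤ) (nG : (G → ℂ) → ℤ)
    (ACH1G : ∀ f g : G → ℂ,
      f ∈ AddSubmonoid.closure ({σ | IsSC CG σ} ∪
        {f | ∃ (H : Subgroup G) (σ : H → ℂ), IsSC (𝒞 H) σ ∧ f = Sind H CG σ}) →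
      g ∈ AddSubmonoid.closure ({σ | IsSC CG σ} ∪
        {f | ∃ (H : Subgroup G) (σ : H → ℂ), IsSC (𝒞 H) σ ∧ f = Sind H CG σ}) →
      nG (f + g) = nG f + nG g)
    (ACH1 : ∀ (H : Subgroup G) (f g : H → ℂ),
      f ∈ AddSubmonoid.closure {σ | IsSC (𝒞 H) σ} →
      g ∈ AddSubmonoid.closure {σ | IsSC (𝒞 H) σ} →
      n H (f + g) = n H f + n H g)
    (ACH2 : ∀ (H : Subgroup G) (σ : H → ℂ), IsSC (𝒞 H) σ → nG (Sind H CG σ) = n H σ)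
    (ACH3 : ∀ (H : Subgroup G) (σ : H → ℂ), IsSC (𝒞 H) σ → IsSumLin σ → 0 ≤ n H σ)
    (H : Subgroup G) (ι : Type) (I : Finset ι) (Hi : ι → Subgroup G)
    (σi : ∀ i : ι, (Hi i) → ℂ)
    (hσ : ∀ i ∈ I, IsSC (𝒞 (Hi i)) (σi i) ∧ IsSumLin (σi i))
    (heq : Sind H CG (fun _ => 1) =
      (fun _ => (1 : ℂ)) + ∑ i ∈ I, Sind (Hi i) CG (σi i)) :
    nG (fun _ => 1) ≤ n H (fun _ => 1) := by

  classical
  have htrivH : IsSC (𝒞 H) (fun _ => 1) := UvdW.triv_isSC ↥H (𝒞 H)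
  have htrivG : IsSC CG (fun _ => (1:ℂ)) := UvdW.triv_isSC G CG
  set S := AddSubmonoid.closure ({σ | IsSC CG σ} ∪
      {f | ∃ (H : Subgroup G) (σ : H → ℂ), IsSC (𝒞 H) σ ∧ f = Sind H CG σ}) with hS
  have mem1 : (fun _ : G => (1:ℂ)) ∈ S := AddSubmonoid.subset_closure (Or.inl htrivG)
  have memSind : ∀ i ∈ I, Sind (Hi i) CG (σi i) ∈ S := fun i hi =>
    AddSubmonoid.subset_closure (Or.inr ⟨Hi i, σi i, (hσ i hi).1, rfl⟩)
  have claim : ∀ J : Finset ι, (∀ i ∈ J, i ∈ I) →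
      nG ((fun _ => (1:ℂ)) + ∑ i ∈ J, Sind (Hi i) CG (σi i))
        = nG (fun _ => 1) + ∑ i ∈ J, nG (Sind (Hi i) CG (σi i)) := by
    intro J
    induction J using Finset.induction_on with
    | empty => intro _; simp
    | insert a J' ha ih =>
      intro hsub
      have haI : a ∈ I := hsub a (Finset.mem_insert_self a J')
      have hsub' : ∀ i ∈ J', i ∈ I := fun i hi => hsub i (Finset.mem_insert_of_mem hi)
      rw [Finset.sum_insert ha, Finset.sum_insert ha]
      have hmemJ : ((fun _ : G => (1:ℂ)) + ∑ i ∈ J', Sind (Hi i) CG (σi i)) ∈ S :=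
        AddSubmonoid.add_mem _ mem1
          (AddSubmonoid.sum_mem _ (fun i hi => memSind i (hsub' i hi)))
      have hre : (fun _ : G => (1:ℂ)) +
            (Sind (Hi a) CG (σi a) + ∑ i ∈ J', Sind (Hi i) CG (σi i))
          = Sind (Hi a) CG (σi a) +
            ((fun _ : G => (1:ℂ)) + ∑ i ∈ J', Sind (Hi i) CG (σi i)) :=
        add_left_comm _ _ _
      rw [hre, ACH1G _ _ (memSind a haI) hmemJ, ih hsub']
      ring
  have hkey := claim I (fun _ h => h)
  rw [← heq, ACH2 H _ htrivH] at hkey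
  have hterm : ∀ i ∈ I, 0 ≤ nG (Sind (Hi i) CG (σi i)) := by
    intro i hi
    rw [ACH2 (Hi i) _ (hσ i hi).1]
    exact ACH3 (Hi i) _ (hσ i hi).1 (hσ i hi).2
  have hpos : 0 ≤ ∑ i ∈ I, nG (Sind (Hi i) CG (σi i)) := Finset.sum_nonneg hterm
  linarith
end

section
/- Let H be a subgroup of a finite group G with compatible supercharacter theories C_H and C_G, and let σ_Y be a supercharacter of H. Then for any supercharacter σ_X of G, ⟨σ_X|_H, σ_Y⟩_H = ⟨σ_X, Sind_H^G σ_Y⟩_G. -/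
open scoped BigOperators Classical

/-- Super Frobenius Reciprocity for supercharacters. -/
theorem stmt15 {G : Type} [Group G] [Finite G] (H : Subgroup G)
    (CH : SCTheory H) (CG : SCTheory G) (hc : Compat H CH CG)
    (σX : G → ℂ) (hX : IsSC CG σX) (σY : H → ℂ) (hY : IsSC CH σY) :
    iprod H (fun h => σX (h : G)) σY = iprod G σX (Sind H CG σY) := by
  classical
  haveI : Fintype G := Fintype.ofFinite G
  haveI : Fintype H := Fintype.ofFinite H
  obtain ⟨A, hA, rfl⟩ := hX
  -- Basic facts about superclasses
  have hmemK : ∀ g : G, SCl CG g ∈ CG.K ∧ g ∈ SCl CG g := by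
    intro g
    obtain ⟨B, ⟨hB, hgB⟩, huniq⟩ := CG.partK.2.2 g (Set.mem_univ g)
    have hS : SCl CG g = B := by
      apply subset_antisymm
      · rintro x ⟨B', ⟨hB', hgB'⟩, hxB'⟩
        rwa [huniq B' ⟨hB', hgB'⟩] at hxB'
      · exact fun x hx => ⟨B, ⟨hB, hgB⟩, hx⟩
    rw [hS]; exact ⟨hB, hgB⟩
  have hscl_eq : ∀ g x, x ∈ SCl CG g → SCl CG x = SCl CG g := by
    intro g x hx
    obtain ⟨B, _, huniq⟩ := CG.partK.2.2 x (Set.mem_univ x)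
    rw [huniq _ ⟨(hmemK x).1, (hmemK x).2⟩, huniq _ ⟨(hmemK g).1, hx⟩]
  have hconst : ∀ g x, x ∈ SCl CG g → sigma A x = sigma A g :=
    fun g x hx => CG.const A hA _ (hmemK g).1 x hx g (hmemK g).2
  set T : G → Finset G := fun g => (SCl CG g).toFinset with hTdef
  have hmemT : ∀ g x, x ∈ T g ↔ x ∈ SCl CG g := fun g x => Set.mem_toFinset
  have hsymm : ∀ g x, x ∈ T g ↔ g ∈ T x := by
    intro g x
    simp only [hmemT]
    constructor
    · intro h; rw [hscl_eq g x h]; exact (hmemK g).2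
    · intro h; rw [hscl_eq x g h]; exact (hmemK x).2
  have hTeq : ∀ g x, x ∈ T g → T x = T g := by
    intro g x hx; simp only [hTdef]; rw [hscl_eq g x ((hmemT g x).1 hx)]
  have hncard : ∀ g, ((SCl CG g).ncard : ℂ) = ((T g).card : ℂ) := by
    intro g; rw [Set.ncard_eq_toFinset_card']
  have hTcard_ne : ∀ g, ((T g).card : ℂ) ≠ 0 := by
    intro g
    have : g ∈ T g := (hmemT g g).2 (hmemK g).2
    have : 0 < (T g).card := Finset.card_pos.2 ⟨g, this⟩
    exact_mod_cast this.ne'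
  set F : G → ℂ := fun g => sigma A g * (starRingEnd ℂ) (ext0 H σY g) with hF
  -- sum over G of an ext0 equals sum over H
  have hsum_ext0 : ∀ φ : H → ℂ, ∑ x : G, ext0 H φ x = ∑ h : H, φ h := by
    intro φ
    calc ∑ x : G, ext0 H φ x
        = ∑ x ∈ (H : Set G).toFinset, ext0 H φ x := by
          refine (Finset.sum_subset (Finset.subset_univ _) ?_).symm
          intro x _ hx
          rw [Set.mem_toFinset] at hx
          exact dif_neg hx
      _ = ∑ h : H, ext0 H φ ↑h :=
          Finset.sum_subtype (p := fun x => x ∈ H) _ (fun x => Set.mem_toFinset) (ext0 H φ)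
      _ = ∑ h : H, φ h := by
          refine Finset.sum_congr rfl fun h _ => ?_
          exact dif_pos h.2 |>.trans (by rw [Subtype.coe_eta])
  have hG0 : (Nat.card G : ℂ) ≠ 0 := by
    have : 0 < Nat.card G := Nat.card_pos
    exact_mod_cast this.ne'
  have hH0 : (Nat.card H : ℂ) ≠ 0 := by
    have : 0 < Nat.card H := Nat.card_pos
    exact_mod_cast this.ne'
  have hfin : ∀ g : G, ∑ᶠ y ∈ SCl CG g, ext0 H σY y = ∑ y ∈ T g, ext0 H σY y := by
    intro g
    rw [← Set.coe_toFinset (SCl CG g), finsum_mem_coe_finset]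
  have hLHS : ∑ᶠ h : H, sigma A (h : G) * (starRingEnd ℂ) (σY h) = ∑ x : G, F x := by
    rw [finsum_eq_sum_of_fintype,
      ← hsum_ext0 (fun h => sigma A (h : G) * (starRingEnd ℂ) (σY h))]
    refine Finset.sum_congr rfl fun x _ => ?_
    simp only [hF, ext0]
    by_cases hx : x ∈ H
    · rw [dif_pos hx, dif_pos hx]
    · rw [dif_neg hx, dif_neg hx, map_zero, mul_zero]
  have hRHS : ∑ᶠ x : G, sigma A x * (starRingEnd ℂ) (Sind H CG σY x)
      = ((Nat.card G : ℂ) / (Nat.card H : ℂ)) * ∑ x : G, F x := by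
    rw [finsum_eq_sum_of_fintype]
    calc ∑ x : G, sigma A x * (starRingEnd ℂ) (Sind H CG σY x)
        = ∑ x : G, ((Nat.card G : ℂ) / ((Nat.card H : ℂ) * ((T x).card : ℂ))) *
            ∑ y ∈ T x, F y := by
          refine Finset.sum_congr rfl fun x _ => ?_
          rw [Sind, hfin x, hncard x, map_mul, map_div₀, map_natCast, map_mul, map_natCast,
            map_natCast, map_sum, mul_left_comm]
          congr 1
          rw [Finset.mul_sum]
          refine Finset.sum_congr rfl fun y hy => ?_
          simp only [hF]
          rw [hconst x y ((hmemT x y).1 hy)]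
      _ = ((Nat.card G : ℂ) / (Nat.card H : ℂ)) *
            ∑ x : G, (((T x).card : ℂ))⁻¹ * ∑ y ∈ T x, F y := by
          rw [Finset.mul_sum]
          refine Finset.sum_congr rfl fun x _ => ?_
          field_simp
      _ = ((Nat.card G : ℂ) / (Nat.card H : ℂ)) *
            ∑ x : G, ∑ y : G, if y ∈ T x then ((T x).card : ℂ)⁻¹ * F y else 0 := by
          congr 1
          refine Finset.sum_congr rfl fun x _ => ?_
          rw [Finset.mul_sum, Finset.sum_ite_mem, Finset.univ_inter]
      _ = ((Nat.card G : ℂ) / (Nat.card H : ℂ)) *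
            ∑ y : G, ∑ x : G, if x ∈ T y then ((T y).card : ℂ)⁻¹ * F y else 0 := by
          rw [Finset.sum_comm]
          congr 1
          refine Finset.sum_congr rfl fun y _ => Finset.sum_congr rfl fun x _ => ?_
          by_cases hxy : y ∈ T x
          · rw [if_pos hxy, if_pos ((hsymm x y).1 hxy), hTeq x y hxy]
          · rw [if_neg hxy, if_neg (fun h => hxy ((hsymm x y).2 h))]
      _ = ((Nat.card G : ℂ) / (Nat.card H : ℂ)) * ∑ y : G, F y := by
          congr 1
          refine Finset.sum_congr rfl fun y _ => ?_
          rw [Finset.sum_ite_mem, Finset.univ_inter, Finset.sum_const, nsmul_eq_mul,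
            ← mul_assoc, mul_inv_cancel₀ (hTcard_ne y), one_mul]
  simp only [iprod]
  rw [hLHS, hRHS]
  field_simp
end
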